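/- Define c_{k,ℓ} = ((-1)^ℓ/ℓ!) ((k+1)!/(k+1-ℓ)!)^2 for integers k ≥ -1 and 0 ≤ ℓ ≤ k+1. Then c_{k,ℓ} = c_{k-1,ℓ} - (2k+1) c_{k-1,ℓ-1} - k^2 c_{k-2,ℓ-2} for all k ≥ 1 and ℓ ≥ 2 with ℓ ≤ k+1. -/
import Mathlib


/-- `c_{k,ℓ} = ((-1)^ℓ/ℓ!)((k+1)!/(k+1-ℓ)!)²` for `0 ≤ ℓ ≤ k+1`, extended by `0`
outside this range. -/
def c (k ℓ : ℤ) : ℚ :=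
  if 0 ≤ ℓ ∧ ℓ ≤ k + 1 then
    (-1 : ℚ)^ℓ.toNat / (Nat.factorial ℓ.toNat) *
      ((Nat.factorial (k+1).toNat : ℚ) / (Nat.factorial (k+1-ℓ).toNat))^2
  else 0

/-- `c_{k,ℓ} = c_{k-1,ℓ} - (2k+1) c_{k-1,ℓ-1} - k² c_{k-2,ℓ-2}` for `k ≥ 1` and
`2 ≤ ℓ ≤ k+1`. -/
theorem c_recurrence (k ℓ : ℤ) (hk : 1 ≤ k) (hl : 2 ≤ ℓ) (hlk : ℓ ≤ k + 1) :
    c k ℓ = c (k-1) ℓ - (2*(k : ℚ)+1) * c (k-1) (ℓ-1) - (k : ℚ)^2 * c (k-2) (ℓ-2) := by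
  obtain ⟨n, rfl⟩ : ∃ n : ℕ, k = (n : ℤ) + 1 := ⟨(k-1).toNat, by omega⟩
  obtain ⟨l, rfl⟩ : ∃ l : ℕ, ℓ = (l : ℤ) + 2 := ⟨(ℓ-2).toNat, by omega⟩
  have hln : l ≤ n := by
    have : (l : ℤ) ≤ n := by omega
    exact_mod_cast this
  unfold c
  rcases Nat.lt_or_ge l n with hcase | hcase
  · obtain ⟨m, rfl⟩ : ∃ m : ℕ, n = l + m + 1 := ⟨n - l - 1, by omega⟩
    rw [if_pos (by omega), if_pos (by omega), if_pos (by omega), if_pos (by omega)]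
    push_cast
    have e1 : ((l:ℤ) + 2).toNat = l + 2 := by omega
    have e2 : ((l:ℤ) + (m:ℤ) + 1 + 1 + 1).toNat = l + m + 3 := by omega
    have e3 : ((l:ℤ) + (m:ℤ) + 1 + 1 + 1 - ((l:ℤ)+2)).toNat = m + 1 := by omega
    have e4 : ((l:ℤ) + (m:ℤ) + 1 + 1 - 1 + 1).toNat = l + m + 2 := by omega
    have e5 : ((l:ℤ) + (m:ℤ) + 1 + 1 - 1 + 1 - ((l:ℤ)+2)).toNat = m := by omega
    have e6 : ((l:ℤ) + 2 - 1).toNat = l + 1 := by omega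
    have e7 : ((l:ℤ) + (m:ℤ) + 1 + 1 - 1 + 1 - ((l:ℤ)+2-1)).toNat = m + 1 := by omega
    have e8 : ((l:ℤ) + 2 - 2).toNat = l := by omega
    have e9 : ((l:ℤ) + (m:ℤ) + 1 + 1 - 2 + 1).toNat = l + m + 1 := by omega
    have e10 : ((l:ℤ) + (m:ℤ) + 1 + 1 - 2 + 1 - ((l:ℤ)+2-2)).toNat = m + 1 := by omega
    rw [e1, e2, e3, e4, e5, e6, e7, e8, e9, e10]
    have f1 : (l+m+3).factorial = (l+m+3)*((l+m+2)*((l+m+1).factorial)) := by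
      rw [show l+m+3 = (l+m+2)+1 from rfl, Nat.factorial_succ, Nat.factorial_succ]
    have f2 : (l+m+2).factorial = (l+m+2)*((l+m+1).factorial) := Nat.factorial_succ _
    have f3 : (l+2).factorial = (l+2)*((l+1)*(l.factorial)) := by
      rw [Nat.factorial_succ, Nat.factorial_succ]
    have f4 : (l+1).factorial = (l+1)*(l.factorial) := Nat.factorial_succ _
    have f5 : (m+1).factorial = (m+1)*(m.factorial) := Nat.factorial_succ _
    rw [f1, f2, f3, f4, f5]
    have hl0 : (l.factorial : ℚ) ≠ 0 := Nat.cast_ne_zero.2 (Nat.factorial_ne_zero _)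
    have hm0 : (m.factorial : ℚ) ≠ 0 := Nat.cast_ne_zero.2 (Nat.factorial_ne_zero _)
    have hlm0 : ((l+m+1).factorial : ℚ) ≠ 0 := Nat.cast_ne_zero.2 (Nat.factorial_ne_zero _)
    push_cast
    field_simp
    ring
  · have hcase' : l = n := le_antisymm hln hcase
    subst hcase'
    rw [if_pos (by omega), if_neg (by omega), if_pos (by omega), if_pos (by omega)]
    push_cast
    have e1 : ((l:ℤ) + 2).toNat = l + 2 := by omega
    have e2 : ((l:ℤ) + 1 + 1).toNat = l + 2 := by omega
    have e3 : ((l:ℤ) + 1 + 1 - ((l:ℤ)+2)).toNat = 0 := by omega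
    have e6 : ((l:ℤ) + 2 - 1).toNat = l + 1 := by omega
    have e7 : ((l:ℤ) + 1 - 1 + 1 - ((l:ℤ)+2-1)).toNat = 0 := by omega
    have e4 : ((l:ℤ) + 1 - 1 + 1).toNat = l + 1 := by omega
    have e8 : ((l:ℤ) + 2 - 2).toNat = l := by omega
    have e9 : ((l:ℤ) + 1 - 2 + 1).toNat = l := by omega
    have e10 : ((l:ℤ) + 1 - 2 + 1 - ((l:ℤ)+2-2)).toNat = 0 := by omega
    rw [e1, e2, e3, e4, e6, e7, e8, e9, e10]
    have f3 : (l+2).factorial = (l+2)*((l+1)*(l.factorial)) := by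
      rw [Nat.factorial_succ, Nat.factorial_succ]
    have f4 : (l+1).factorial = (l+1)*(l.factorial) := Nat.factorial_succ _
    rw [f3, f4, Nat.factorial_zero]
    have hl0 : (l.factorial : ℚ) ≠ 0 := Nat.cast_ne_zero.2 (Nat.factorial_ne_zero _)
    push_cast
    field_simp
    ring
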